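/- Let q, t be positive integers, let R ∈ ℝ^{2q×2t} be centrosymmetric (R·J_{2t} = J_{2q}·R), and let μ > 0. Then the matrix RᵀR + μ·I_{2t} is invertible and the controller gain matrix K = (RᵀR + μ·I_{2t})⁻¹·Rᵀ ∈ ℝ^{2t×2q} is centrosymmetric, i.e. K·J_{2q} = J_{2t}·K. -/

import Mathlib

open Matrix

/-- The exchange matrix `J_n` with ones on the anti-diagonal and zeros elsewhere. -/
def exchMatrix (n : ℕ) : Matrix (Fin n) (Fin n) ℝ :=
  Matrix.of fun i j => if (i : ℕ) + (j : ℕ) = n - 1 then 1 else 0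

lemma exchMatrix_transpose (n : ℕ) : (exchMatrix n)ᵀ = exchMatrix n := by
  ext i j
  simp [exchMatrix, Matrix.transpose_apply, Nat.add_comm]

/-- **The controller gain matrix of a centrosymmetric orbit response matrix is
centrosymmetric.** If `R ∈ ℝ^{2q×2t}` is centrosymmetric and `μ > 0`, then `RᵀR + μ·I` is
invertible and `K = (RᵀR + μ·I)⁻¹·Rᵀ` satisfies `K·J_{2q} = J_{2t}·K`. -/
theorem gain_matrix_centrosymmetric
    (q t : ℕ) (hq : 0 < q) (ht : 0 < t)
    (R : Matrix (Fin (2 * q)) (Fin (2 * t)) ℝ)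
    (hR : R * exchMatrix (2 * t) = exchMatrix (2 * q) * R)
    (μ : ℝ) (hμ : 0 < μ) :
    IsUnit (Rᵀ * R + μ • (1 : Matrix (Fin (2 * t)) (Fin (2 * t)) ℝ)) ∧
    (Rᵀ * R + μ • (1 : Matrix (Fin (2 * t)) (Fin (2 * t)) ℝ))⁻¹ * Rᵀ * exchMatrix (2 * q) =
      exchMatrix (2 * t) *
        ((Rᵀ * R + μ • (1 : Matrix (Fin (2 * t)) (Fin (2 * t)) ℝ))⁻¹ * Rᵀ) := by
  set M := Rᵀ * R + μ • (1 : Matrix (Fin (2 * t)) (Fin (2 * t)) ℝ) with hM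
  -- M is positive definite, hence a unit
  have hsemi : (Rᵀ * R).PosSemidef := by
    have := Matrix.posSemidef_conjTranspose_mul_self R
    simpa [Matrix.conjTranspose_eq_transpose_of_trivial] using this
  have hdiag : μ • (1 : Matrix (Fin (2 * t)) (Fin (2 * t)) ℝ)
      = Matrix.diagonal (fun _ => μ) := by
    ext i j
    by_cases h : i = j <;> simp [Matrix.one_apply, Matrix.diagonal, h]
  have hpos : M.PosDef := by
    rw [hM, hdiag]
    exact Matrix.PosDef.posSemidef_add hsemi ((Matrix.posDef_diagonal_iff).2 fun _ => hμ)
  have hunit : IsUnit M := hpos.isUnit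
  refine ⟨hunit, ?_⟩
  -- transpose of hR
  have hRT : exchMatrix (2 * t) * Rᵀ = Rᵀ * exchMatrix (2 * q) := by
    have := congrArg Matrix.transpose hR
    simpa [Matrix.transpose_mul, exchMatrix_transpose] using this
  -- M commutes with J_{2t}
  have hcomm : M * exchMatrix (2 * t) = exchMatrix (2 * t) * M := by
    rw [hM, add_mul, mul_add, Matrix.smul_mul, Matrix.mul_smul, one_mul, mul_one]
    congr 1
    calc Rᵀ * R * exchMatrix (2 * t) = Rᵀ * (R * exchMatrix (2 * t)) := by rw [Matrix.mul_assoc]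
      _ = Rᵀ * (exchMatrix (2 * q) * R) := by rw [hR]
      _ = (Rᵀ * exchMatrix (2 * q)) * R := by rw [Matrix.mul_assoc]
      _ = (exchMatrix (2 * t) * Rᵀ) * R := by rw [hRT]
      _ = exchMatrix (2 * t) * (Rᵀ * R) := by rw [Matrix.mul_assoc]
  -- hence M⁻¹ commutes with J_{2t}
  have hinv : M⁻¹ * exchMatrix (2 * t) = exchMatrix (2 * t) * M⁻¹ := by
    have h1 : M * M⁻¹ = 1 := Matrix.mul_nonsing_inv M (isUnit_iff_isUnit_det M |>.1 hunit)
    have h2 : M⁻¹ * M = 1 := Matrix.nonsing_inv_mul M (isUnit_iff_isUnit_det M |>.1 hunit)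
    calc M⁻¹ * exchMatrix (2 * t) = M⁻¹ * exchMatrix (2 * t) * (M * M⁻¹) := by rw [h1, mul_one]
      _ = M⁻¹ * (exchMatrix (2 * t) * M) * M⁻¹ := by noncomm_ring
      _ = M⁻¹ * (M * exchMatrix (2 * t)) * M⁻¹ := by rw [hcomm]
      _ = (M⁻¹ * M) * (exchMatrix (2 * t) * M⁻¹) := by noncomm_ring
      _ = exchMatrix (2 * t) * M⁻¹ := by rw [h2, one_mul]
  calc M⁻¹ * Rᵀ * exchMatrix (2 * q) = M⁻¹ * (Rᵀ * exchMatrix (2 * q)) := by rw [Matrix.mul_assoc]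
    _ = M⁻¹ * (exchMatrix (2 * t) * Rᵀ) := by rw [hRT]
    _ = (M⁻¹ * exchMatrix (2 * t)) * Rᵀ := by rw [Matrix.mul_assoc]
    _ = exchMatrix (2 * t) * (M⁻¹ * Rᵀ) := by rw [hinv, Matrix.mul_assoc]
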